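/- Let Γ be a cancellation monoid and R a Γ-graded ring. Then R is graded left semihereditary if and only if R is graded left coherent and every homogeneous left ideal of R is gr-flat. -/

import Mathlib

set_option linter.unusedSectionVars false
set_option linter.unnecessarySimpa false
set_option maxHeartbeats 1000000


namespace GradedPaper

open DirectSum

section Defs

variable {Γ : Type} [DecidableEq Γ] [AddCancelMonoid Γ]

section RingDefs

variable {R : Type} [Ring R]

/-- The grading of a module is compatible with the grading of the ring. -/
def SMulClosed (𝒜 : Γ → AddSubgroup R) {M : Type} [AddCommGroup M] [Module R M]
    (ℳ : Γ → AddSubgroup M) : Prop :=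
  ∀ ⦃i j : Γ⦄ ⦃a : R⦄ ⦃m : M⦄, a ∈ 𝒜 i → m ∈ ℳ j → a • m ∈ ℳ (i + j)

/-- The multiplicative condition `R_α R_β ⊆ R_{αβ}` of a graded ring. -/
def MulClosed (𝒜 : Γ → AddSubgroup R) : Prop :=
  ∀ ⦃i j : Γ⦄ ⦃a b : R⦄, a ∈ 𝒜 i → b ∈ 𝒜 j → a * b ∈ 𝒜 (i + j)

/-- A homogeneous (degree-preserving) homomorphism of graded modules. -/
def IsHomogeneousHom {M N : Type} [AddCommGroup M] [Module R M]
    [AddCommGroup N] [Module R N]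
    (ℳ : Γ → AddSubgroup M) (𝒩 : Γ → AddSubgroup N) (f : M →ₗ[R] N) : Prop :=
  ∀ i : Γ, ∀ x ∈ ℳ i, f x ∈ 𝒩 i

/-- A homogeneous homomorphism of degree `d`. -/
def IsHomogeneousOfDeg {M N : Type} [AddCommGroup M] [Module R M]
    [AddCommGroup N] [Module R N]
    (ℳ : Γ → AddSubgroup M) (𝒩 : Γ → AddSubgroup N) (d : Γ) (f : M →ₗ[R] N) : Prop :=
  ∀ i : Γ, ∀ x ∈ ℳ i, f x ∈ 𝒩 (i + d)

/-- A submodule is graded if it contains the homogeneous components of its elements. -/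
def IsGradedSubmodule {M : Type} [AddCommGroup M] [Module R M]
    (ℳ : Γ → AddSubgroup M) [DirectSum.Decomposition ℳ] (N : Submodule R M) : Prop :=
  ∀ x ∈ N, ∀ i : Γ, (DirectSum.decompose ℳ x i : M) ∈ N

/-- The induced grading on a submodule. -/
def subGrading {M : Type} [AddCommGroup M] [Module R M]
    (ℳ : Γ → AddSubgroup M) (N : Submodule R M) : Γ → AddSubgroup ↥N :=
  fun i => AddSubgroup.comap (N.subtype.toAddMonoidHom) (ℳ i)

/-- The induced grading on a quotient module. -/
def quotGrading {M : Type} [AddCommGroup M] [Module R M]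
    (ℳ : Γ → AddSubgroup M) (N : Submodule R M) : Γ → AddSubgroup (M ⧸ N) :=
  fun i => AddSubgroup.map (N.mkQ).toAddMonoidHom (ℳ i)

/-- A graded module is gr-free if it has a basis of homogeneous elements. -/
def IsGrFree {F : Type} [AddCommGroup F] [Module R F] (ℱ : Γ → AddSubgroup F) : Prop :=
  ∃ (ι : Type) (b : Module.Basis ι R F), ∀ j : ι, ∃ i : Γ, b j ∈ ℱ i

/-- Finitely generated gr-free. -/
def IsGrFreeFin {F : Type} [AddCommGroup F] [Module R F] (ℱ : Γ → AddSubgroup F) : Prop :=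
  ∃ (n : ℕ) (b : Module.Basis (Fin n) R F), ∀ j : Fin n, ∃ i : Γ, b j ∈ ℱ i

/-- Gr-projective: homogeneous lifting property against homogeneous epimorphisms. -/
def IsGrProjective (𝒜 : Γ → AddSubgroup R) {P : Type} [AddCommGroup P] [Module R P]
    (𝒬 : Γ → AddSubgroup P) : Prop :=
  ∀ (M N : Type) [AddCommGroup M] [Module R M] [AddCommGroup N] [Module R N]
    (ℳ : Γ → AddSubgroup M) (𝒩 : Γ → AddSubgroup N)
    [DirectSum.Decomposition ℳ] [DirectSum.Decomposition 𝒩],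
    SMulClosed 𝒜 ℳ → SMulClosed 𝒜 𝒩 →
    ∀ (g : M →ₗ[R] N), IsHomogeneousHom ℳ 𝒩 g → Function.Surjective g →
    ∀ (f : P →ₗ[R] N), IsHomogeneousHom 𝒬 𝒩 f →
    ∃ h : P →ₗ[R] M, IsHomogeneousHom 𝒬 ℳ h ∧ g ∘ₗ h = f

/-- Gr-injective: homogeneous extension property against homogeneous monomorphisms. -/
def IsGrInjective (𝒜 : Γ → AddSubgroup R) {E : Type} [AddCommGroup E] [Module R E]
    (ℰ : Γ → AddSubgroup E) : Prop :=
  ∀ (M N : Type) [AddCommGroup M] [Module R M] [AddCommGroup N] [Module R N]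
    (ℳ : Γ → AddSubgroup M) (𝒩 : Γ → AddSubgroup N)
    [DirectSum.Decomposition ℳ] [DirectSum.Decomposition 𝒩],
    SMulClosed 𝒜 ℳ → SMulClosed 𝒜 𝒩 →
    ∀ (g : M →ₗ[R] N), IsHomogeneousHom ℳ 𝒩 g → Function.Injective g →
    ∀ (f : M →ₗ[R] E), IsHomogeneousHom ℳ ℰ f →
    ∃ h : N →ₗ[R] E, IsHomogeneousHom 𝒩 ℰ h ∧ h ∘ₗ g = f

/-- A right nonzero divisor. -/
def IsRightNonZeroDivisor (r : R) : Prop := r ≠ 0 ∧ ∀ b : R, b * r = 0 → b = 0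

/-- Gr-divisible graded module. -/
def IsGrDivisible (𝒜 : Γ → AddSubgroup R) {M : Type} [AddCommGroup M] [Module R M]
    (ℳ : Γ → AddSubgroup M) : Prop :=
  ∀ (i j k : Γ), i + k = j → ∀ r ∈ 𝒜 i, IsRightNonZeroDivisor r →
    ∀ y ∈ ℳ j, ∃ x ∈ ℳ k, r • x = y

/-- Graded isomorphism of graded modules. -/
def GrIso {M N : Type} [AddCommGroup M] [Module R M] [AddCommGroup N] [Module R N]
    (ℳ : Γ → AddSubgroup M) (𝒩 : Γ → AddSubgroup N) : Prop :=
  ∃ e : M ≃ₗ[R] N, IsHomogeneousHom ℳ 𝒩 e.toLinearMap ∧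
    IsHomogeneousHom 𝒩 ℳ e.symm.toLinearMap

/-- Graded left hereditary ring: every homogeneous left ideal is gr-projective. -/
def GrLeftHereditary (𝒜 : Γ → AddSubgroup R) [DirectSum.Decomposition 𝒜] : Prop :=
  ∀ I : Submodule R R, IsGradedSubmodule 𝒜 I → IsGrProjective 𝒜 (subGrading 𝒜 I)

/-- Graded left semihereditary ring: every finitely generated homogeneous left ideal is
gr-projective. -/
def GrLeftSemihereditary (𝒜 : Γ → AddSubgroup R) [DirectSum.Decomposition 𝒜] : Prop :=
  ∀ I : Submodule R R, IsGradedSubmodule 𝒜 I → I.FG → IsGrProjective 𝒜 (subGrading 𝒜 I)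

/-- The natural grading on a direct limit of graded modules. -/
noncomputable def limGrading {ι : Type} [Preorder ι] [DecidableEq ι] (F : ι → Type)
    [∀ i, AddCommGroup (F i)] [∀ i, Module R (F i)]
    (ℱ : ∀ i, Γ → AddSubgroup (F i))
    (t : ∀ i j, i ≤ j → F i →ₗ[R] F j) : Γ → AddSubgroup (Module.DirectLimit F t) :=
  fun γ => ⨆ i, (ℱ i γ).map (Module.DirectLimit.of R ι F t i).toAddMonoidHom

end RingDefs

section CommDefs

variable {R : Type} [CommRing R]

/-- Gr-flat: tensoring preserves homogeneous monomorphisms of graded modules. -/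
def IsGrFlat (𝒜 : Γ → AddSubgroup R) {F : Type} [AddCommGroup F] [Module R F]
    (ℱ : Γ → AddSubgroup F) : Prop :=
  ∀ (M N : Type) [AddCommGroup M] [Module R M] [AddCommGroup N] [Module R N]
    (ℳ : Γ → AddSubgroup M) (𝒩 : Γ → AddSubgroup N)
    [DirectSum.Decomposition ℳ] [DirectSum.Decomposition 𝒩],
    SMulClosed 𝒜 ℳ → SMulClosed 𝒜 𝒩 →
    ∀ (f : M →ₗ[R] N), IsHomogeneousHom ℳ 𝒩 f → Function.Injective f →
      Function.Injective (LinearMap.rTensor F f)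

end CommDefs

end Defs

section Stmt18

variable {Γ : Type} [DecidableEq Γ] [AddCancelMonoid Γ] {R : Type} [CommRing R]

/-- Graded left coherent: every finitely generated graded left ideal is finitely
presented. -/
def GrLeftCoherent (𝒜 : Γ → AddSubgroup R) [DirectSum.Decomposition 𝒜] : Prop :=
  ∀ I : Submodule R R, IsGradedSubmodule 𝒜 I → I.FG → Module.FinitePresentation R ↥I

end Stmt18

section Aux

open DirectSum

namespace Aux

open scoped Classical

variable {Γ : Type} [DecidableEq Γ] [AddCancelMonoid Γ] {R : Type} [CommRing R]

section General

variable {M : Type} [AddCommGroup M] (ℳ : Γ → AddSubgroup M) [DirectSum.Decomposition ℳ]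

/-- The additive map sending `x` to its degree-`γ` homogeneous component. -/
noncomputable def compHom (γ : Γ) : M →+ M :=
  ((ℳ γ).subtype).comp ((DFinsupp.evalAddMonoidHom γ).comp
    (DirectSum.decomposeAddEquiv ℳ).toAddMonoidHom)

lemma compHom_apply (γ : Γ) (x : M) :
    compHom ℳ γ x = (DirectSum.decompose ℳ x γ : M) := rfl

lemma decompose_sum_apply {α : Type*} (S : Finset α) (g : α → M) (γ : Γ) :
    (DirectSum.decompose ℳ (∑ t ∈ S, g t) γ : M)
      = ∑ t ∈ S, (DirectSum.decompose ℳ (g t) γ : M) := by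
  rw [← compHom_apply]
  simpa [compHom_apply] using map_sum (compHom ℳ γ) g S

lemma decompose_add_apply (x y : M) (γ : Γ) :
    (DirectSum.decompose ℳ (x + y) γ : M)
      = (DirectSum.decompose ℳ x γ : M) + (DirectSum.decompose ℳ y γ : M) := by
  rw [← compHom_apply, map_add, compHom_apply, compHom_apply]

lemma sum_decompose_of_supset {T : Finset Γ} {x : M}
    (hT : DFinsupp.support (DirectSum.decompose ℳ x) ⊆ T) :
    ∑ γ ∈ T, (DirectSum.decompose ℳ x γ : M) = x := by
  rw [← Finset.sum_subset hT (by
    intro γ _ hγ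
    rw [DFinsupp.notMem_support_iff] at hγ
    simp [hγ])]
  exact DirectSum.sum_support_decompose ℳ x

lemma indep_hom {α : Type*} (S : Finset α) (g : α → M) (deg : α → Γ)
    (hg : ∀ t ∈ S, g t ∈ ℳ (deg t)) (hinj : Set.InjOn deg S)
    (h0 : ∑ t ∈ S, g t = 0) : ∀ t ∈ S, g t = 0 := by
  intro t₀ ht₀
  have h1 : (DirectSum.decompose ℳ (∑ t ∈ S, g t) (deg t₀) : M) = 0 := by
    rw [h0]; simp
  rw [decompose_sum_apply] at h1
  rw [Finset.sum_eq_single t₀ (fun t ht hne => ?_) (fun h => absurd ht₀ h)] at h1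
  · rwa [DirectSum.decompose_of_mem_same ℳ (hg t₀ ht₀)] at h1
  · exact DirectSum.decompose_of_mem_ne ℳ (hg t ht)
      (fun h => hne (hinj ht ht₀ h))

end General

section SmulLemmas

variable (𝒜 : Γ → AddSubgroup R) {M : Type} [AddCommGroup M] [Module R M]
  (ℳ : Γ → AddSubgroup M) [DirectSum.Decomposition ℳ]

lemma decompose_smul_add (hSC : SMulClosed 𝒜 ℳ) {a : R} {α : Γ} (ha : a ∈ 𝒜 α)
    (m : M) (γ : Γ) :
    (DirectSum.decompose ℳ (a • m) (α + γ) : M) = a • (DirectSum.decompose ℳ m γ : M) := by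
  induction m using DirectSum.Decomposition.inductionOn ℳ with
  | zero => simp
  | add m m' hm hm' =>
      rw [smul_add, decompose_add_apply, decompose_add_apply, hm, hm', smul_add]
  | homogeneous m =>
      rename_i δ
      by_cases hδ : δ = γ
      · subst hδ
        rw [DirectSum.decompose_of_mem_same ℳ (hSC ha m.2),
          DirectSum.decompose_of_mem_same ℳ m.2]
      · rw [DirectSum.decompose_of_mem_ne ℳ (hSC ha m.2)
          (fun h => hδ (by exact add_left_cancel h)),
          DirectSum.decompose_of_mem_ne ℳ m.2 hδ, smul_zero]

lemma decompose_smul_notex (hSC : SMulClosed 𝒜 ℳ) {a : R} {α : Γ} (ha : a ∈ 𝒜 α)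
    (m : M) {γ : Γ} (hγ : ¬ ∃ ν, α + ν = γ) :
    (DirectSum.decompose ℳ (a • m) γ : M) = 0 := by
  induction m using DirectSum.Decomposition.inductionOn ℳ with
  | zero => simp
  | add m m' hm hm' => rw [smul_add, decompose_add_apply, hm, hm', add_zero]
  | homogeneous m =>
      rename_i δ
      exact DirectSum.decompose_of_mem_ne ℳ (hSC ha m.2) (fun h => hγ ⟨δ, h⟩)

end SmulLemmas

section Ring

variable (𝒜 : Γ → AddSubgroup R) [DirectSum.Decomposition 𝒜]

lemma smulClosed_self (hmul : MulClosed 𝒜) : SMulClosed 𝒜 𝒜 := by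
  intro i j a b ha hb
  rw [smul_eq_mul]
  exact hmul ha hb

lemma one_mem_grading (hmul : MulClosed 𝒜) : (1 : R) ∈ 𝒜 0 := by
  set e : R := (DirectSum.decompose 𝒜 (1 : R) 0 : R) with he
  have hkey : ∀ (α : Γ) (a : R), a ∈ 𝒜 α → a * e = a := by
    intro α a ha
    have h1 : a = ∑ γ ∈ DFinsupp.support (DirectSum.decompose 𝒜 (1:R)),
        a * (DirectSum.decompose 𝒜 (1:R) γ : R) := by
      rw [← Finset.mul_sum, DirectSum.sum_support_decompose, mul_one]
    have h2 : a =
        ∑ γ ∈ DFinsupp.support (DirectSum.decompose 𝒜 (1:R)),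
          (DirectSum.decompose 𝒜 (a * (DirectSum.decompose 𝒜 (1:R) γ : R)) α : R) := by
      conv_lhs => rw [h1]
      rw [← decompose_sum_apply, ← h1, DirectSum.decompose_of_mem_same 𝒜 ha]
    by_cases h0 : (0 : Γ) ∈ DFinsupp.support (DirectSum.decompose 𝒜 (1:R))
    · rw [Finset.sum_eq_single (0 : Γ) (fun γ hγ hne => ?_) (fun h => absurd h0 h)] at h2
      · have hmem : a * e ∈ 𝒜 α := by
          have := hmul ha (DirectSum.decompose 𝒜 (1:R) 0).2
          rwa [add_zero] at this
        rw [DirectSum.decompose_of_mem_same 𝒜 hmem] at h2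
        exact h2.symm
      · exact DirectSum.decompose_of_mem_ne 𝒜 (hmul ha (DirectSum.decompose 𝒜 (1:R) γ).2)
          (fun h => hne (add_left_cancel (h.trans (add_zero α).symm)))
    · have ha0 : a = 0 := by
        rw [Finset.sum_eq_zero (fun γ hγ => ?_)] at h2
        · exact h2
        · refine DirectSum.decompose_of_mem_ne 𝒜 (hmul ha (DirectSum.decompose 𝒜 (1:R) γ).2)
            (fun h => ?_)
          have hγ0 : γ = 0 := add_left_cancel (h.trans (add_zero α).symm)
          exact h0 (hγ0 ▸ hγ)
      rw [ha0, zero_mul]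
  have key : ∀ a : R, a * e = a := by
    intro a
    induction a using DirectSum.Decomposition.inductionOn 𝒜 with
    | zero => simp
    | add a a' h h' => rw [add_mul, h, h']
    | homogeneous a => exact hkey _ _ a.2
  have h1 : e = 1 := by rw [← one_mul e, key 1]
  rw [← h1]
  exact (DirectSum.decompose 𝒜 (1:R) 0).2

end Ring

end Aux

end Aux

section Chunk3

namespace Aux

open DirectSum
open scoped Classical

variable {Γ : Type} [DecidableEq Γ] [AddCancelMonoid Γ] {R : Type} [CommRing R]
variable (𝒜 : Γ → AddSubgroup R)

/-- Elements homogeneous of some degree `μ` with `μ + ν = γ` (or zero). -/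
def grHomTo (ν γ : Γ) : AddSubgroup R where
  carrier := {x | x = 0 ∨ ∃ μ, μ + ν = γ ∧ x ∈ 𝒜 μ}
  zero_mem' := Or.inl rfl
  add_mem' := by
    rintro x y (rfl | ⟨μ, hμ, hx⟩) hy
    · simpa using hy
    · rcases hy with rfl | ⟨μ', hμ', hy⟩
      · rw [add_zero]; exact Or.inr ⟨μ, hμ, hx⟩
      · obtain rfl : μ = μ' := add_right_cancel (hμ.trans hμ'.symm)
        exact Or.inr ⟨μ, hμ, add_mem hx hy⟩
  neg_mem' := by
    rintro x (rfl | ⟨μ, hμ, hx⟩)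
    · exact Or.inl neg_zero
    · exact Or.inr ⟨μ, hμ, neg_mem hx⟩

lemma grHomTo_of_mem {ν γ μ : Γ} {x : R} (h : μ + ν = γ) (hx : x ∈ 𝒜 μ) :
    x ∈ grHomTo 𝒜 ν γ := Or.inr ⟨μ, h, hx⟩

lemma grHomTo_cases {ν γ : Γ} {x : R} (h : x ∈ grHomTo 𝒜 ν γ) :
    x = 0 ∨ ∃ μ, μ + ν = γ ∧ x ∈ 𝒜 μ := h

variable [DirectSum.Decomposition 𝒜]

lemma grHomTo_mul (hmul : MulClosed 𝒜) {ζ γ ζ' : Γ} {b b' : R}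
    (hb : b ∈ grHomTo 𝒜 ζ γ) (hb' : b' ∈ grHomTo 𝒜 ζ' ζ) :
    b * b' ∈ grHomTo 𝒜 ζ' γ := by
  rcases grHomTo_cases 𝒜 hb with rfl | ⟨μ, hμ, hbm⟩
  · rw [zero_mul]; exact zero_mem _
  rcases grHomTo_cases 𝒜 hb' with rfl | ⟨μ', hμ', hbm'⟩
  · rw [mul_zero]; exact zero_mem _
  refine grHomTo_of_mem 𝒜 (μ := μ + μ') ?_ (hmul hbm hbm')
  rw [add_assoc, hμ', hμ]

lemma grHomTo_mul_mem (hmul : MulClosed 𝒜) {ν γ : Γ} {x y : R}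
    (hx : x ∈ grHomTo 𝒜 ν γ) (hy : y ∈ 𝒜 ν) : x * y ∈ 𝒜 γ := by
  rcases grHomTo_cases 𝒜 hx with rfl | ⟨μ, hμ, hxm⟩
  · rw [zero_mul]; exact zero_mem _
  · rw [← hμ]; exact hmul hxm hy

lemma one_mem_grHomTo (hmul : MulClosed 𝒜) (γ : Γ) : (1 : R) ∈ grHomTo 𝒜 γ γ :=
  grHomTo_of_mem 𝒜 (zero_add γ) (one_mem_grading 𝒜 hmul)

/-- The component of `s` of the degree `μ` such that `μ + ν = γ` (zero if there is no
such degree). -/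
noncomputable def compAt (s : R) (ν γ : Γ) : R :=
  if h : ∃ μ, μ + ν = γ then (DirectSum.decompose 𝒜 s h.choose : R) else 0

lemma compAt_mem (s : R) (ν γ : Γ) : compAt 𝒜 s ν γ ∈ grHomTo 𝒜 ν γ := by
  rw [compAt]
  split_ifs with h
  · exact grHomTo_of_mem 𝒜 h.choose_spec (DirectSum.decompose 𝒜 s h.choose).2
  · exact zero_mem _

lemma compAt_zero (ν γ : Γ) : compAt 𝒜 (0 : R) ν γ = 0 := by
  rw [compAt]; split_ifs with h <;> simp

lemma compAt_add (s s' : R) (ν γ : Γ) :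
    compAt 𝒜 (s + s') ν γ = compAt 𝒜 s ν γ + compAt 𝒜 s' ν γ := by
  rw [compAt, compAt, compAt]
  split_ifs with h
  · exact decompose_add_apply 𝒜 s s' _
  · rw [add_zero]

lemma compAt_sum {α : Type*} (S : Finset α) (g : α → R) (ν γ : Γ) :
    compAt 𝒜 (∑ t ∈ S, g t) ν γ = ∑ t ∈ S, compAt 𝒜 (g t) ν γ := by
  classical
  induction S using Finset.induction_on with
  | empty => simpa using compAt_zero 𝒜 ν γ
  | insert a s hx ih =>
      rw [Finset.sum_insert hx, Finset.sum_insert hx, compAt_add, ih]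

lemma compAt_add_self (s : R) (μ ν : Γ) :
    compAt 𝒜 s ν (μ + ν) = (DirectSum.decompose 𝒜 s μ : R) := by
  rw [compAt]
  have h : ∃ μ', μ' + ν = μ + ν := ⟨μ, rfl⟩
  rw [dif_pos h]
  have hc : h.choose = μ := add_right_cancel h.choose_spec
  rw [hc]

lemma compAt_eq_zero_of_notex {s : R} {ν γ : Γ} (h : ¬ ∃ μ, μ + ν = γ) :
    compAt 𝒜 s ν γ = 0 := by rw [compAt, dif_neg h]

lemma compAt_eq_zero (s : R) {ν γ : Γ}
    (h : ∀ μ, μ + ν = γ → (DirectSum.decompose 𝒜 s μ : R) = 0) :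
    compAt 𝒜 s ν γ = 0 := by
  rw [compAt]
  split_ifs with hex
  · exact h _ hex.choose_spec
  · rfl

/-- Key multiplicativity: for homogeneous `y` of degree `ν`,
the `γ` component of `s * y` is `compAt s ν γ * y`. -/
lemma decompose_mul_homog (hmul : MulClosed 𝒜) (s : R) {y : R} {ν : Γ} (hy : y ∈ 𝒜 ν)
    (γ : Γ) : (DirectSum.decompose 𝒜 (s * y) γ : R) = compAt 𝒜 s ν γ * y := by
  induction s using DirectSum.Decomposition.inductionOn 𝒜 with
  | zero => rw [zero_mul, compAt_zero, zero_mul, DirectSum.decompose_zero]; rfl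
  | add s s' h h' => rw [add_mul, decompose_add_apply, h, h', compAt_add, add_mul]
  | homogeneous s =>
      rename_i μ₀
      have hmem : (s : R) * y ∈ 𝒜 (μ₀ + ν) := hmul s.2 hy
      by_cases hex : ∃ μ, μ + ν = γ
      · obtain ⟨μ₁, hμ₁⟩ := hex
        subst hμ₁
        rw [compAt_add_self]
        by_cases hμ : μ₀ = μ₁
        · subst hμ
          rw [DirectSum.decompose_of_mem_same 𝒜 hmem,
            DirectSum.decompose_of_mem_same 𝒜 s.2]
        · rw [DirectSum.decompose_of_mem_ne 𝒜 hmem (fun h => hμ (add_right_cancel h)),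
            DirectSum.decompose_of_mem_ne 𝒜 s.2 hμ, zero_mul]
      · rw [compAt_eq_zero_of_notex 𝒜 hex, zero_mul]
        exact DirectSum.decompose_of_mem_ne 𝒜 hmem (fun h => hex ⟨μ₀, h⟩)

lemma compAt_mul_left (hmul : MulClosed 𝒜) {c : R} {γ δ : Γ}
    (hc : c ∈ grHomTo 𝒜 γ δ) (s : R) (ν : Γ) :
    c * compAt 𝒜 s ν γ = compAt 𝒜 (c * s) ν δ := by
  rcases grHomTo_cases 𝒜 hc with rfl | ⟨κ, hκ, hcm⟩
  · rw [zero_mul, zero_mul, compAt_zero]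
  induction s using DirectSum.Decomposition.inductionOn 𝒜 with
  | zero => rw [mul_zero, compAt_zero, mul_zero, compAt_zero]
  | add s s' h h' => rw [compAt_add, mul_add, h, h', mul_add, compAt_add]
  | homogeneous s =>
      rename_i μ₀
      have hcs : c * (s : R) ∈ 𝒜 (κ + μ₀) := hmul hcm s.2
      by_cases hex : ∃ μ, μ + ν = γ
      · obtain ⟨μ₁, hμ₁⟩ := hex
        subst hμ₁
        rw [compAt_add_self]
        have hδ : (κ + μ₁) + ν = δ := by rw [add_assoc, hκ]
        rw [← hδ, compAt_add_self]
        by_cases hμ : μ₀ = μ₁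
        · subst hμ
          rw [DirectSum.decompose_of_mem_same 𝒜 s.2,
            DirectSum.decompose_of_mem_same 𝒜 hcs]
        · rw [DirectSum.decompose_of_mem_ne 𝒜 s.2 hμ,
            DirectSum.decompose_of_mem_ne 𝒜 hcs
              (fun h => hμ (add_left_cancel h)), mul_zero]
      · rw [compAt_eq_zero_of_notex 𝒜 hex, mul_zero]
        refine (compAt_eq_zero 𝒜 _ (fun μ hμ => ?_)).symm
        refine DirectSum.decompose_of_mem_ne 𝒜 hcs (fun h => ?_)
        subst h
        exact hex ⟨μ₀, add_left_cancel (by rw [← add_assoc, hμ, ← hκ] )⟩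

end Aux

end Chunk3

section Chunk4

namespace Aux

open DirectSum
open scoped Classical

variable {Γ : Type} [DecidableEq Γ] [AddCancelMonoid Γ] {R : Type} [CommRing R]

lemma mem_subGrading {M : Type} [AddCommGroup M] [Module R M]
    (ℳ : Γ → AddSubgroup M) (N : Submodule R M) (x : ↥N) (i : Γ) :
    x ∈ subGrading ℳ N i ↔ (x : M) ∈ ℳ i := Iff.rfl

section DecompMul

variable (𝒜 : Γ → AddSubgroup R) [DirectSum.Decomposition 𝒜]

lemma decompose_mul_full (hmul : MulClosed 𝒜) (s z : R) {T : Finset Γ}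
    (hT : DFinsupp.support (DirectSum.decompose 𝒜 z) ⊆ T) (γ : Γ) :
    (DirectSum.decompose 𝒜 (s * z) γ : R)
      = ∑ ν ∈ T, compAt 𝒜 s ν γ * (DirectSum.decompose 𝒜 z ν : R) := by
  conv_lhs => rw [← sum_decompose_of_supset 𝒜 hT, Finset.mul_sum]
  rw [decompose_sum_apply]
  exact Finset.sum_congr rfl fun ν _ =>
    decompose_mul_homog 𝒜 hmul s (DirectSum.decompose 𝒜 z ν).2 γ

lemma isGraded_span (hmul : MulClosed 𝒜) (S : Set R) (hS : ∀ s ∈ S, ∃ μ, s ∈ 𝒜 μ) :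
    ∀ x ∈ Submodule.span R S, ∀ γ, (DirectSum.decompose 𝒜 x γ : R) ∈ Submodule.span R S := by
  intro x hx
  induction hx using Submodule.span_induction with
  | mem s hs =>
      intro γ
      obtain ⟨μ, hμ⟩ := hS s hs
      by_cases hγ : μ = γ
      · rw [← hγ, DirectSum.decompose_of_mem_same 𝒜 hμ]
        exact Submodule.subset_span hs
      · rw [DirectSum.decompose_of_mem_ne 𝒜 hμ hγ]
        exact zero_mem _
  | zero => intro γ; simp
  | add x y _ _ hx hy =>
      intro γ
      rw [decompose_add_apply]
      exact add_mem (hx γ) (hy γ)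
  | smul a x _ hx =>
      induction a using DirectSum.Decomposition.inductionOn 𝒜 with
      | zero => intro γ; rw [zero_smul]; simp
      | add a a' h h' =>
          intro γ
          rw [add_smul, decompose_add_apply]
          exact add_mem (h γ) (h' γ)
      | homogeneous a =>
          rename_i α
          intro γ
          by_cases hex : ∃ ν, α + ν = γ
          · obtain ⟨ν, rfl⟩ := hex
            rw [decompose_smul_add 𝒜 𝒜 (smulClosed_self 𝒜 hmul) a.2 x ν]
            exact Submodule.smul_mem _ _ (hx ν)
          · rw [decompose_smul_notex 𝒜 𝒜 (smulClosed_self 𝒜 hmul) a.2 x hex]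
            exact zero_mem _

end DecompMul

section SubDecomp

variable {M : Type} [AddCommGroup M] [Module R M] (ℳ : Γ → AddSubgroup M)
  [DirectSum.Decomposition ℳ] (N : Submodule R M)

lemma isInternal_subGrading
    (hN : ∀ x ∈ N, ∀ γ, (DirectSum.decompose ℳ x γ : M) ∈ N) :
    DirectSum.IsInternal (subGrading ℳ N) := by
  constructor
  · rw [injective_iff_map_eq_zero]
    intro w hw
    have hw1 : ∑ γ ∈ DFinsupp.support w, ((w γ : ↥N) : M) = 0 := by
      have h0 : DirectSum.coeAddMonoidHom (subGrading ℳ N) w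
          = ∑ γ ∈ DFinsupp.support w, (w γ : ↥N) := by
        conv_lhs => rw [← DirectSum.sum_support_of w]
        rw [map_sum]
        exact Finset.sum_congr rfl fun γ _ => DirectSum.coeAddMonoidHom_of _ _ _
      have h1 := h0.symm.trans hw
      have h2 := congrArg (N.subtype) h1
      rw [map_sum, map_zero] at h2
      exact h2
    have hzero := indep_hom ℳ (DFinsupp.support w)
      (fun γ => ((w γ : ↥N) : M)) id (fun γ _ => (w γ).2)
      (Function.Injective.injOn fun a b h => h) hw1
    refine DFinsupp.ext fun γ => ?_
    by_cases hγ : γ ∈ DFinsupp.support w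
    · have h1 : ((w γ : ↥N) : M) = 0 := hzero γ hγ
      have h2 : (w γ : ↥N) = 0 := Subtype.ext h1
      exact Subtype.ext h2
    · rw [DFinsupp.notMem_support_iff.mp hγ]
      rfl
  · intro x
    refine ⟨∑ γ ∈ DFinsupp.support (DirectSum.decompose ℳ (x : M)),
      DirectSum.of (fun γ => subGrading ℳ N γ) γ
        ⟨⟨(DirectSum.decompose ℳ (x : M) γ : M), hN (x : M) x.2 γ⟩,
          (DirectSum.decompose ℳ (x : M) γ).2⟩, ?_⟩
    rw [map_sum]
    have : ∀ γ ∈ DFinsupp.support (DirectSum.decompose ℳ (x : M)),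
        DirectSum.coeAddMonoidHom (subGrading ℳ N)
          (DirectSum.of (fun γ => subGrading ℳ N γ) γ
            ⟨⟨(DirectSum.decompose ℳ (x : M) γ : M), hN (x : M) x.2 γ⟩,
              (DirectSum.decompose ℳ (x : M) γ).2⟩)
          = ⟨(DirectSum.decompose ℳ (x : M) γ : M), hN (x : M) x.2 γ⟩ :=
      fun γ _ => DirectSum.coeAddMonoidHom_of _ _ _
    rw [Finset.sum_congr rfl this]
    apply Subtype.ext
    push_cast
    exact DirectSum.sum_support_decompose ℳ (x : M)

/-- The decomposition of a graded submodule. -/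
noncomputable def subDecomp
    (hN : ∀ x ∈ N, ∀ γ, (DirectSum.decompose ℳ x γ : M) ∈ N) :
    DirectSum.Decomposition (subGrading ℳ N) :=
  (isInternal_subGrading ℳ N hN).chooseDecomposition

lemma smulClosed_subGrading (𝒜 : Γ → AddSubgroup R) (hSC : SMulClosed 𝒜 ℳ) :
    SMulClosed 𝒜 (subGrading ℳ N) := by
  intro i j a m ha hm
  rw [mem_subGrading]
  have : ((a • m : ↥N) : M) = a • (m : M) := rfl
  rw [this]
  exact hSC ha hm

end SubDecomp

end Aux

end Chunk4

section Chunk5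

namespace Aux

open DirectSum TensorProduct
open scoped Classical

variable {Γ : Type} [DecidableEq Γ] [AddCancelMonoid Γ] {R : Type} [CommRing R]
variable (𝒜 : Γ → AddSubgroup R) [DirectSum.Decomposition 𝒜]

/-- Single homogeneous relations in a graded ideal trivialize homogeneously, provided
tensoring with the ideal preserves injections of graded ideals. -/
lemma single_relation_trivializes (hmul : MulClosed 𝒜) (I : Submodule R R)
    (hI : ∀ x ∈ I, ∀ γ, (DirectSum.decompose 𝒜 x γ : R) ∈ I)
    (hflat : ∀ W : Submodule R R, (∀ x ∈ W, ∀ γ, (DirectSum.decompose 𝒜 x γ : R) ∈ W) →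
      Function.Injective (LinearMap.rTensor ↥I W.subtype))
    {ι : Type} [Fintype ι] (γd : ι → Γ) (δ : Γ) (c v : ι → R)
    (hc : ∀ q, c q ∈ grHomTo 𝒜 (γd q) δ)
    (hvI : ∀ q, v q ∈ I) (hv : ∀ q, v q ∈ 𝒜 (γd q))
    (hrel : ∑ q, c q * v q = 0) :
    ∃ (κ : Type) (_ : Fintype κ) (ζ : κ → Γ) (z : κ → R) (b : ι → κ → R),
      (∀ j, z j ∈ I) ∧ (∀ j, z j ∈ 𝒜 (ζ j)) ∧
      (∀ q j, b q j ∈ grHomTo 𝒜 (ζ j) (γd q)) ∧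
      (∀ q, v q = ∑ j, b q j * z j) ∧ (∀ j, ∑ q, c q * b q j = 0) := by
  have hWgr : ∀ x ∈ Submodule.span R (Set.range c), ∀ γ,
      (DirectSum.decompose 𝒜 x γ : R) ∈ Submodule.span R (Set.range c) := by
    refine isGraded_span 𝒜 hmul _ ?_
    rintro s ⟨q, rfl⟩
    rcases grHomTo_cases 𝒜 (hc q) with h0 | ⟨μ, hμ, hm⟩
    · exact ⟨δ, h0 ▸ zero_mem _⟩
    · exact ⟨μ, hm⟩
  have hinj := hflat _ hWgr
  set n : ι → ↥I := fun q => ⟨v q, hvI q⟩ with hn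
  have hmn : ∑ q, c q ⊗ₜ n q = (0 : R ⊗[R] ↥I) := by
    apply (TensorProduct.lid R ↥I).injective
    rw [map_sum, map_zero]
    have : ∀ q, (TensorProduct.lid R ↥I) (c q ⊗ₜ n q) = c q • n q := fun q =>
      TensorProduct.lid_tmul _ _
    rw [Finset.sum_congr rfl fun q _ => this q]
    apply Subtype.ext
    push_cast
    simpa [smul_eq_mul] using hrel
  obtain ⟨κ, a, y, h1, h2⟩ :=
    TensorProduct.vanishesTrivially_of_sum_tmul_eq_zero_of_rTensor_injective R hinj hmn
  have hz : ∀ q, v q = ∑ j, a q j * (y j : R) := by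
    intro q
    have := congrArg (Submodule.subtype I) (h1 q)
    simpa [hn, smul_eq_mul] using this
  have hac : ∀ j, ∑ q, a q j * c q = 0 := by
    intro j
    simpa [smul_eq_mul] using h2 j
  set T : Finset Γ :=
    Finset.univ.biUnion (fun j : Fin κ => DFinsupp.support (DirectSum.decompose 𝒜 (y j : R)))
    with hT
  refine ⟨Fin κ × {ν : Γ // ν ∈ T}, inferInstance, fun p => p.2.val,
    fun p => (DirectSum.decompose 𝒜 (y p.1 : R) p.2.val : R),
    fun q p => compAt 𝒜 (a q p.1) p.2.val (γd q), ?_, ?_, ?_, ?_, ?_⟩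
  · exact fun p => hI _ (y p.1).2 _
  · exact fun p => (DirectSum.decompose 𝒜 (y p.1 : R) p.2.val).2
  · exact fun q p => compAt_mem 𝒜 _ _ _
  · intro q
    rw [Fintype.sum_prod_type]
    have inner : ∀ j : Fin κ, ∑ ν : {ν : Γ // ν ∈ T},
        compAt 𝒜 (a q j) ν.val (γd q) * (DirectSum.decompose 𝒜 (y j : R) ν.val : R)
        = (DirectSum.decompose 𝒜 (a q j * (y j : R)) (γd q) : R) := by
      intro j
      have e1 := Finset.sum_coe_sort T (fun ν =>
        compAt 𝒜 (a q j) ν (γd q) * (DirectSum.decompose 𝒜 ((y j : R)) ν : R))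
      rw [e1]
      refine (decompose_mul_full 𝒜 hmul _ _ ?_ _).symm
      exact Finset.subset_biUnion_of_mem
        (fun j : Fin κ => DFinsupp.support (DirectSum.decompose 𝒜 (y j : R)))
        (Finset.mem_univ j)
    rw [Finset.sum_congr rfl fun j _ => inner j, ← decompose_sum_apply, ← hz q,
      DirectSum.decompose_of_mem_same 𝒜 (hv q)]
  · intro p
    obtain ⟨j, ν⟩ := p
    have : ∀ q, c q * compAt 𝒜 (a q j) ν.val (γd q)
        = compAt 𝒜 (c q * a q j) ν.val δ := fun q =>
      compAt_mul_left 𝒜 hmul (hc q) _ _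
    rw [Finset.sum_congr rfl fun q _ => this q, ← compAt_sum]
    have h0 : ∑ q, c q * a q j = 0 := by
      rw [Finset.sum_congr rfl fun q _ => mul_comm (c q) (a q j)]
      exact hac j
    rw [h0, compAt_zero]

/-- Homogeneous systems of relations in a graded ideal trivialize homogeneously. -/
lemma system_trivializes (hmul : MulClosed 𝒜) (I : Submodule R R)
    (hI : ∀ x ∈ I, ∀ γ, (DirectSum.decompose 𝒜 x γ : R) ∈ I)
    (hflat : ∀ W : Submodule R R, (∀ x ∈ W, ∀ γ, (DirectSum.decompose 𝒜 x γ : R) ∈ W) →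
      Function.Injective (LinearMap.rTensor ↥I W.subtype))
    (M : ℕ) {ι : Type} [Fintype ι] (γd : ι → Γ) (δ : Fin M → Γ)
    (C : Fin M → ι → R) (hC : ∀ t q, C t q ∈ grHomTo 𝒜 (γd q) (δ t))
    (v : ι → R) (hvI : ∀ q, v q ∈ I) (hv : ∀ q, v q ∈ 𝒜 (γd q))
    (hrel : ∀ t, ∑ q, C t q * v q = 0) :
    ∃ (κ : Type) (_ : Fintype κ) (ζ : κ → Γ) (z : κ → R) (b : ι → κ → R),
      (∀ j, z j ∈ I) ∧ (∀ j, z j ∈ 𝒜 (ζ j)) ∧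
      (∀ q j, b q j ∈ grHomTo 𝒜 (ζ j) (γd q)) ∧
      (∀ q, v q = ∑ j, b q j * z j) ∧ (∀ t j, ∑ q, C t q * b q j = 0) := by
  induction M generalizing ι with
  | zero =>
      refine ⟨ι, inferInstance, γd, v, fun q j => if q = j then 1 else 0,
        hvI, hv, ?_, ?_, fun t => t.elim0⟩
      · intro q j
        dsimp only
        split_ifs with h
        · subst h; exact one_mem_grHomTo 𝒜 hmul _
        · exact zero_mem _
      · intro q
        symm
        dsimp only
        rw [Finset.sum_congr rfl (fun j _ => by
          rw [ite_mul, one_mul, zero_mul])]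
        simp
  | succ M ih =>
      obtain ⟨κ₁, hκ₁, ζ₁, z₁, b₁, hz₁I, hz₁h, hb₁mem, hb₁main, hb₁rel⟩ :=
        single_relation_trivializes 𝒜 hmul I hI hflat γd (δ 0) (C 0) v (hC 0) hvI hv (hrel 0)
      letI := hκ₁
      obtain ⟨D, hD⟩ : ∃ D : Fin M → κ₁ → R,
          ∀ t j, D t j = ∑ q, C t.succ q * b₁ q j := ⟨_, fun _ _ => rfl⟩
      have hDmem : ∀ t j, D t j ∈ grHomTo 𝒜 (ζ₁ j) (δ t.succ) := fun t j =>
        (hD t j) ▸ sum_mem fun q _ => grHomTo_mul 𝒜 hmul (hC t.succ q) (hb₁mem q j)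
      have hDrel : ∀ t, ∑ j, D t j * z₁ j = 0 := by
        intro t
        have h1 : ∀ j, D t j * z₁ j = ∑ q, C t.succ q * (b₁ q j * z₁ j) := by
          intro j
          rw [hD t j, Finset.sum_mul]
          exact Finset.sum_congr rfl fun q _ => mul_assoc _ _ _
        rw [Finset.sum_congr rfl fun j _ => h1 j, Finset.sum_comm]
        rw [Finset.sum_congr rfl fun q _ => by
          rw [← Finset.mul_sum, ← hb₁main q]]
        exact hrel t.succ
      obtain ⟨κ₂, hκ₂, ζ₂, z₂, b₂, hz₂I, hz₂h, hb₂mem, hb₂main, hb₂rel⟩ :=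
        ih ζ₁ (fun t => δ t.succ) D hDmem z₁ hz₁I hz₁h hDrel
      letI := hκ₂
      refine ⟨κ₂, inferInstance, ζ₂, z₂, fun q l => ∑ j, b₁ q j * b₂ j l,
        hz₂I, hz₂h, ?_, ?_, ?_⟩
      · exact fun q l => sum_mem fun j _ => grHomTo_mul 𝒜 hmul (hb₁mem q j) (hb₂mem j l)
      · intro q
        rw [hb₁main q, Finset.sum_congr rfl fun j _ => by rw [hb₂main j, Finset.mul_sum]]
        rw [Finset.sum_comm]
        refine Finset.sum_congr rfl fun l _ => ?_
        rw [Finset.sum_mul]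
        exact Finset.sum_congr rfl fun j _ => (mul_assoc _ _ _).symm
      · intro t l
        have key : ∑ q, C t q * ∑ j, b₁ q j * b₂ j l
            = ∑ j, (∑ q, C t q * b₁ q j) * b₂ j l := by
          rw [Finset.sum_congr rfl fun q _ => by rw [Finset.mul_sum]]
          rw [Finset.sum_comm]
          refine Finset.sum_congr rfl fun j _ => ?_
          rw [Finset.sum_mul]
          exact Finset.sum_congr rfl fun q _ => (mul_assoc _ _ _).symm
        rw [key]
        induction t using Fin.cases with
        | zero =>
            rw [Finset.sum_congr rfl fun j _ => by rw [hb₁rel j, zero_mul]]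
            simp
        | succ t' =>
            rw [Finset.sum_congr rfl fun j _ => by rw [← hD t' j]]
            exact hb₂rel t' l

end Aux

end Chunk5

section Chunk6

namespace Aux

open DirectSum TensorProduct
open scoped Classical

variable {Γ : Type} [DecidableEq Γ] [AddCancelMonoid Γ] {R : Type} [CommRing R]
variable (𝒜 : Γ → AddSubgroup R) [DirectSum.Decomposition 𝒜]

lemma flat_of_forall_fintype {R M : Type} [CommRing R] [AddCommGroup M] [Module R M]
    (h : ∀ {ι : Type} [Fintype ι] {f : ι → R} {x : ι → M},
      ∑ i, f i • x i = 0 → Module.IsTrivialRelation f x) : Module.Flat R M :=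
  Module.Flat.of_forall_isTrivialRelation (fun hrel => h hrel)

lemma isTrivialRelation_of_fintype {R M : Type} [CommRing R] [AddCommGroup M] [Module R M]
    {ι : Type} [Fintype ι] {f : ι → R} {x : ι → M} {κ : Type} [Fintype κ]
    (a : ι → κ → R) (y : κ → M) (h1 : ∀ i, x i = ∑ j, a i j • y j)
    (h2 : ∀ j, ∑ i, f i * a i j = 0) : Module.IsTrivialRelation f x := by
  rw [Module.isTrivialRelation_iff_vanishesTrivially]
  exact TensorProduct.VanishesTrivially.of_fintype a y h1
    (fun j => by simpa [smul_eq_mul, mul_comm] using h2 j)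

lemma flat_of_graded_rTensor_inj (hmul : MulClosed 𝒜) (I : Submodule R R)
    (hI : ∀ x ∈ I, ∀ γ, (DirectSum.decompose 𝒜 x γ : R) ∈ I)
    (hflat : ∀ W : Submodule R R, (∀ x ∈ W, ∀ γ, (DirectSum.decompose 𝒜 x γ : R) ∈ W) →
      Function.Injective (LinearMap.rTensor ↥I W.subtype)) :
    Module.Flat R ↥I := by
  refine flat_of_forall_fintype (fun {ι} _ {f} {x} hrel => ?_)
  set y : ι → R := fun i => (x i : R) with hy
  have hyI : ∀ i, y i ∈ I := fun i => (x i).2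
  have hrel' : ∑ i, f i * y i = 0 := by
    have := congrArg (Submodule.subtype I) hrel
    rw [map_sum, map_zero] at this
    simpa [hy, smul_eq_mul] using this
  set Ty : Finset Γ :=
    Finset.univ.biUnion (fun i : ι => DFinsupp.support (DirectSum.decompose 𝒜 (y i))) with hTy
  set Tf : Finset Γ :=
    Finset.univ.biUnion (fun i : ι => DFinsupp.support (DirectSum.decompose 𝒜 (f i))) with hTf
  set Tδ : Finset Γ := (Tf ×ˢ Ty).image (fun p => p.1 + p.2) with hTδ
  set M : ℕ := Fintype.card {δ : Γ // δ ∈ Tδ} with hM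
  set e : Fin M ≃ {δ : Γ // δ ∈ Tδ} := (Fintype.equivFin {δ : Γ // δ ∈ Tδ}).symm with he
  set δt : Fin M → Γ := fun t => (e t).val with hδt
  -- the homogeneous system
  set γd : ι × {ν : Γ // ν ∈ Ty} → Γ := fun p => p.2.val with hγd
  set v : ι × {ν : Γ // ν ∈ Ty} → R := fun p => (DirectSum.decompose 𝒜 (y p.1) p.2.val : R) with hv'
  set C : Fin M → ι × {ν : Γ // ν ∈ Ty} → R := fun t p => compAt 𝒜 (f p.1) p.2.val (δt t) with hC'
  have hC : ∀ t p, C t p ∈ grHomTo 𝒜 (γd p) (δt t) := fun t p => compAt_mem 𝒜 _ _ _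
  have hvI : ∀ p, v p ∈ I := fun p => hI _ (hyI p.1) _
  have hvh : ∀ p, v p ∈ 𝒜 (γd p) := fun p => (DirectSum.decompose 𝒜 (y p.1) p.2.val).2
  have hrelt : ∀ t, ∑ p, C t p * v p = 0 := by
    intro t
    rw [Fintype.sum_prod_type]
    have inner : ∀ i : ι, ∑ ν : {ν : Γ // ν ∈ Ty},
        compAt 𝒜 (f i) ν.val (δt t) * (DirectSum.decompose 𝒜 (y i) ν.val : R)
        = (DirectSum.decompose 𝒜 (f i * y i) (δt t) : R) := by
      intro i
      have e1 := Finset.sum_coe_sort Ty (fun ν =>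
        compAt 𝒜 (f i) ν (δt t) * (DirectSum.decompose 𝒜 (y i) ν : R))
      rw [e1]
      refine (decompose_mul_full 𝒜 hmul _ _ ?_ _).symm
      exact Finset.subset_biUnion_of_mem
        (fun i : ι => DFinsupp.support (DirectSum.decompose 𝒜 (y i)))
        (Finset.mem_univ i)
    rw [Finset.sum_congr rfl fun i _ => inner i, ← decompose_sum_apply, hrel']
    simp
  obtain ⟨κ, hκ, ζ, z, b, hzI, hzh, hbmem, hbmain, hbrel⟩ :=
    system_trivializes 𝒜 hmul I hI hflat M γd δt C hC v hvI hvh hrelt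
  letI := hκ
  refine isTrivialRelation_of_fintype (fun i j => ∑ ν : {ν : Γ // ν ∈ Ty}, b (i, ν) j)
    (fun j => ⟨z j, hzI j⟩) ?_ ?_
  · intro i
    apply Subtype.ext
    push_cast
    have h1 : (x i : R) = ∑ ν : {ν : Γ // ν ∈ Ty}, v (i, ν) := by
      have e1 := Finset.sum_coe_sort Ty (fun ν => (DirectSum.decompose 𝒜 (y i) ν : R))
      rw [hv']
      dsimp only
      rw [e1]
      refine (sum_decompose_of_supset 𝒜 ?_).symm
      exact Finset.subset_biUnion_of_mem
        (fun i : ι => DFinsupp.support (DirectSum.decompose 𝒜 (y i)))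
        (Finset.mem_univ i)
    rw [h1, Finset.sum_congr rfl fun ν _ => hbmain (i, ν), Finset.sum_comm]
    refine Finset.sum_congr rfl fun j _ => ?_
    rw [smul_eq_mul, Finset.sum_mul]
  · intro j
    have key : ∀ i (ν : {ν : Γ // ν ∈ Ty}), f i * b (i, ν) j
        = ∑ t : Fin M, C t (i, ν) * b (i, ν) j := by
      intro i ν
      have h2 : ∑ t : Fin M, C t (i, ν) * b (i, ν) j
          = ∑ δ' ∈ Tδ, compAt 𝒜 (f i) ν.val δ' * b (i, ν) j := by
        rw [← Finset.sum_coe_sort Tδ (fun δ' => compAt 𝒜 (f i) ν.val δ' * b (i, ν) j)]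
        exact Fintype.sum_equiv e _ _ (fun t => rfl)
      rw [h2]
      have hsub : Tf.image (fun μ => μ + ν.val) ⊆ Tδ := by
        intro δ' hδ'
        obtain ⟨μ, hμ, rfl⟩ := Finset.mem_image.mp hδ'
        exact Finset.mem_image.mpr ⟨(μ, ν.val), Finset.mem_product.mpr ⟨hμ, ν.2⟩, rfl⟩
      have hzero : ∀ δ' ∈ Tδ, δ' ∉ Tf.image (fun μ => μ + ν.val) →
          compAt 𝒜 (f i) ν.val δ' * b (i, ν) j = 0 := by
        intro δ' _ hδ'
        have hc0 : compAt 𝒜 (f i) ν.val δ' = 0 := by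
          refine compAt_eq_zero 𝒜 _ (fun μ hμ => ?_)
          by_contra hne
          refine hδ' (Finset.mem_image.mpr ⟨μ, ?_, hμ⟩)
          refine Finset.mem_biUnion.mpr ⟨i, Finset.mem_univ i, ?_⟩
          exact DFinsupp.mem_support_iff.mpr (fun h0 => hne (by rw [h0]; rfl))
        rw [hc0, zero_mul]
      rw [← Finset.sum_subset hsub hzero]
      rw [Finset.sum_image (fun μ _ μ' _ h => add_right_cancel h)]
      rw [Finset.sum_congr rfl fun μ _ => by rw [compAt_add_self]]
      rw [← Finset.sum_mul]
      congr 1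
      refine (sum_decompose_of_supset 𝒜 ?_).symm
      exact Finset.subset_biUnion_of_mem
        (fun i : ι => DFinsupp.support (DirectSum.decompose 𝒜 (f i)))
        (Finset.mem_univ i)
    rw [Finset.sum_congr rfl fun i _ => by rw [Finset.mul_sum]]
    rw [Finset.sum_congr rfl fun i _ => Finset.sum_congr rfl fun ν _ => key i ν]
    have hfold : ∑ i : ι, ∑ ν : {ν : Γ // ν ∈ Ty}, ∑ t : Fin M, C t (i, ν) * b (i, ν) j
        = ∑ p : ι × {ν : Γ // ν ∈ Ty}, ∑ t : Fin M, C t p * b p j :=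
      (Fintype.sum_prod_type (fun p : ι × {ν : Γ // ν ∈ Ty} =>
        ∑ t : Fin M, C t p * b p j)).symm
    rw [hfold, Finset.sum_comm]
    rw [Finset.sum_congr rfl fun t _ => hbrel t j]
    simp

end Aux

end Chunk6

section Chunk7

namespace Aux

open DirectSum
open scoped Classical

variable {Γ : Type} [DecidableEq Γ] [AddCancelMonoid Γ] {R : Type} [CommRing R]

lemma decompose_map_apply {M N : Type} [AddCommGroup M] [Module R M]
    [AddCommGroup N] [Module R N] (ℳ : Γ → AddSubgroup M) (𝒩 : Γ → AddSubgroup N)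
    [DirectSum.Decomposition ℳ] [DirectSum.Decomposition 𝒩]
    (g : M →ₗ[R] N) (hg : IsHomogeneousHom ℳ 𝒩 g) (y : M) (γ : Γ) :
    g (DirectSum.decompose ℳ y γ : M) = (DirectSum.decompose 𝒩 (g y) γ : N) := by
  induction y using DirectSum.Decomposition.inductionOn ℳ with
  | zero => simp
  | add y y' hy hy' =>
      rw [decompose_add_apply, map_add, hy, hy', map_add, decompose_add_apply]
  | homogeneous y =>
      rename_i δ
      by_cases hδ : δ = γ
      · subst hδ
        rw [DirectSum.decompose_of_mem_same ℳ y.2,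
          DirectSum.decompose_of_mem_same 𝒩 (hg δ y y.2)]
      · rw [DirectSum.decompose_of_mem_ne ℳ y.2 hδ, map_zero,
          DirectSum.decompose_of_mem_ne 𝒩 (hg δ y y.2) hδ]

section DegZero

variable (𝒜 : Γ → AddSubgroup R) [DirectSum.Decomposition 𝒜]
variable {P M : Type} [AddCommGroup P] [Module R P] [AddCommGroup M] [Module R M]
variable (𝒬 : Γ → AddSubgroup P) [DirectSum.Decomposition 𝒬]
variable (ℳ : Γ → AddSubgroup M) [DirectSum.Decomposition ℳ]

/-- The degree-preserving part of a linear map between graded modules. -/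
noncomputable def degZeroAdd (h' : P →ₗ[R] M) : P →+ M :=
  (DirectSum.toAddMonoid (fun γ =>
    { toFun := fun x : 𝒬 γ => (DirectSum.decompose ℳ (h' (x : P)) γ : M)
      map_zero' := by simp
      map_add' := by
        intro x y
        push_cast
        rw [map_add, decompose_add_apply] })).comp
    (DirectSum.decomposeAddEquiv 𝒬).toAddMonoidHom

lemma degZeroAdd_apply_of_mem (h' : P →ₗ[R] M) {x : P} {γ : Γ} (hx : x ∈ 𝒬 γ) :
    degZeroAdd 𝒬 ℳ h' x = (DirectSum.decompose ℳ (h' x) γ : M) := by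
  rw [degZeroAdd, AddMonoidHom.comp_apply]
  have h1 : (DirectSum.decomposeAddEquiv 𝒬).toAddMonoidHom x
      = DirectSum.of (fun γ => 𝒬 γ) γ ⟨x, hx⟩ := DirectSum.decompose_of_mem 𝒬 hx
  rw [h1, DirectSum.toAddMonoid_of]
  rfl

lemma degZeroAdd_smul (hQ : SMulClosed 𝒜 𝒬) (hM : SMulClosed 𝒜 ℳ)
    (h' : P →ₗ[R] M) (r : R) (x : P) :
    degZeroAdd 𝒬 ℳ h' (r • x) = r • degZeroAdd 𝒬 ℳ h' x := by
  induction x using DirectSum.Decomposition.inductionOn 𝒬 with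
  | zero => rw [smul_zero, map_zero, smul_zero]
  | add x x' hx hx' => rw [smul_add, map_add, hx, hx', map_add, smul_add]
  | homogeneous x =>
      rename_i γ
      induction r using DirectSum.Decomposition.inductionOn 𝒜 with
      | zero => rw [zero_smul, map_zero, zero_smul]
      | add r r' hr hr' => rw [add_smul, map_add, hr, hr', add_smul]
      | homogeneous r =>
          rename_i α
          rw [degZeroAdd_apply_of_mem 𝒬 ℳ h' (hQ r.2 x.2),
            degZeroAdd_apply_of_mem 𝒬 ℳ h' x.2, map_smul]
          exact decompose_smul_add 𝒜 ℳ hM r.2 (h' (x : P)) γ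

/-- The degree-preserving part, as a linear map. -/
noncomputable def degZero (hQ : SMulClosed 𝒜 𝒬) (hM : SMulClosed 𝒜 ℳ)
    (h' : P →ₗ[R] M) : P →ₗ[R] M :=
  { degZeroAdd 𝒬 ℳ h' with
    map_smul' := degZeroAdd_smul 𝒜 𝒬 ℳ hQ hM h' }

lemma degZero_apply_of_mem (hQ : SMulClosed 𝒜 𝒬) (hM : SMulClosed 𝒜 ℳ)
    (h' : P →ₗ[R] M) {x : P} {γ : Γ} (hx : x ∈ 𝒬 γ) :
    degZero 𝒜 𝒬 ℳ hQ hM h' x = (DirectSum.decompose ℳ (h' x) γ : M) :=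
  degZeroAdd_apply_of_mem 𝒬 ℳ h' hx

end DegZero

/-- A projective graded module is gr-projective. -/
lemma isGrProjective_of_projective (𝒜 : Γ → AddSubgroup R) [DirectSum.Decomposition 𝒜]
    {P : Type} [AddCommGroup P] [Module R P]
    (𝒬 : Γ → AddSubgroup P) [DirectSum.Decomposition 𝒬] (hQ : SMulClosed 𝒜 𝒬)
    (hproj : Module.Projective R P) : IsGrProjective 𝒜 𝒬 := by
  intro M N _ _ _ _ ℳ 𝒩 _ _ hM hN g hg hgsurj f hf
  obtain ⟨h', hh'⟩ := Module.projective_lifting_property g f hgsurj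
  refine ⟨degZero 𝒜 𝒬 ℳ hQ hM h', ?_, ?_⟩
  · intro γ x hx
    rw [degZero_apply_of_mem 𝒜 𝒬 ℳ hQ hM h' hx]
    exact (DirectSum.decompose ℳ (h' x) γ).2
  · apply LinearMap.ext
    intro x
    induction x using DirectSum.Decomposition.inductionOn 𝒬 with
    | zero => simp
    | add x x' hx hx' => rw [map_add, map_add, hx, hx']
    | homogeneous x =>
        rename_i γ
        rw [LinearMap.comp_apply, degZero_apply_of_mem 𝒜 𝒬 ℳ hQ hM h' x.2,
          decompose_map_apply ℳ 𝒩 g hg]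
        have h1 : g (h' (x : P)) = f (x : P) := by
          rw [← LinearMap.comp_apply, hh']
        rw [h1, DirectSum.decompose_of_mem_same 𝒩 (hf γ x x.2)]

end Aux

end Chunk7

section Chunk8

namespace Aux

open DirectSum
open scoped Classical

variable {Γ : Type} [DecidableEq Γ] [AddCancelMonoid Γ] {R : Type} [CommRing R]
variable (𝒜 : Γ → AddSubgroup R) [DirectSum.Decomposition 𝒜]

lemma exists_homog_generators (I : Submodule R R)
    (hI : ∀ x ∈ I, ∀ γ, (DirectSum.decompose 𝒜 x γ : R) ∈ I) (hFG : I.FG) :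
    ∃ (ι : Type) (_ : Fintype ι) (d : ι → Γ) (xg : ι → R),
      (∀ k, xg k ∈ 𝒜 (d k)) ∧ (∀ k, xg k ∈ I) ∧
      Submodule.span R (Set.range xg) = I := by
  obtain ⟨s, hs⟩ := hFG
  set T : Finset Γ := s.biUnion (fun r => DFinsupp.support (DirectSum.decompose 𝒜 r)) with hT
  have hsI : ∀ r ∈ s, r ∈ I := by
    intro r hr
    rw [← hs]
    exact Submodule.subset_span hr
  refine ⟨{r : R // r ∈ s} × {ν : Γ // ν ∈ T}, inferInstance, fun p => p.2.val,
    fun p => (DirectSum.decompose 𝒜 p.1.val p.2.val : R),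
    fun p => (DirectSum.decompose 𝒜 p.1.val p.2.val).2,
    fun p => hI p.1.val (hsI p.1.val p.1.2) p.2.val, ?_⟩
  apply le_antisymm
  · rw [Submodule.span_le]
    rintro _ ⟨p, rfl⟩
    exact hI p.1.val (hsI p.1.val p.1.2) p.2.val
  · rw [← hs, Submodule.span_le]
    intro r hr
    have hsupp : DFinsupp.support (DirectSum.decompose 𝒜 r) ⊆ T :=
      Finset.subset_biUnion_of_mem (fun r => DFinsupp.support (DirectSum.decompose 𝒜 r)) hr
    have h1 : r = ∑ ν ∈ T, (DirectSum.decompose 𝒜 r ν : R) :=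
      (sum_decompose_of_supset 𝒜 hsupp).symm
    rw [h1]
    apply sum_mem
    intro ν hν
    have h2 := Finset.sum_coe_sort T (fun ν => (DirectSum.decompose 𝒜 r ν : R))
    refine Submodule.subset_span ⟨(⟨r, hr⟩, ⟨ν, hν⟩), rfl⟩

section PiShift

variable (ι : Type) [Fintype ι] [DecidableEq ι] (d : ι → Γ)

/-- The shifted grading on a finite free module. -/
def piShift : Γ → AddSubgroup (ι → R) := fun γ =>
  AddSubgroup.pi Set.univ (fun k => grHomTo 𝒜 (d k) γ)

lemma grHomTo_indep (dd : Γ) {α : Type*} (S : Finset α) (g : α → R) (deg : α → Γ)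
    (hinj : Set.InjOn deg S) (hg : ∀ t ∈ S, g t ∈ grHomTo 𝒜 dd (deg t))
    (h0 : ∑ t ∈ S, g t = 0) : ∀ t ∈ S, g t = 0 := by
  intro t₀ ht₀
  rcases grHomTo_cases 𝒜 (hg t₀ ht₀) with h | ⟨μ₀, hμ₀, hmem⟩
  · exact h
  have h1 : (DirectSum.decompose 𝒜 (∑ t ∈ S, g t) μ₀ : R) = 0 := by rw [h0]; simp
  rw [decompose_sum_apply] at h1
  rw [Finset.sum_eq_single t₀ (fun t ht hne => ?_) (fun h => absurd ht₀ h)] at h1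
  · rwa [DirectSum.decompose_of_mem_same 𝒜 hmem] at h1
  · rcases grHomTo_cases 𝒜 (hg t ht) with h | ⟨μ, hμ, hmem'⟩
    · rw [h]; simp
    · refine DirectSum.decompose_of_mem_ne 𝒜 hmem' (fun h => ?_)
      subst h
      exact hne (hinj ht ht₀ (hμ.symm ▸ hμ₀ ▸ rfl))

lemma isInternal_piShift : DirectSum.IsInternal (piShift 𝒜 ι d) := by
  constructor
  · rw [injective_iff_map_eq_zero]
    intro w hw
    have h0 : ∑ γ ∈ DFinsupp.support w, ((w γ : ↥(piShift 𝒜 ι d γ)) : ι → R) = 0 := by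
      have h1 : DirectSum.coeAddMonoidHom (piShift 𝒜 ι d) w
          = ∑ γ ∈ DFinsupp.support w, ((w γ : ↥(piShift 𝒜 ι d γ)) : ι → R) := by
        conv_lhs => rw [← DirectSum.sum_support_of w]
        rw [map_sum]
        exact Finset.sum_congr rfl fun γ _ => DirectSum.coeAddMonoidHom_of _ _ _
      rw [← h1, hw]
    refine DFinsupp.ext fun γ => ?_
    by_cases hγ : γ ∈ DFinsupp.support w
    · refine Subtype.ext (funext fun k => ?_)
      have hcoord : ∑ γ' ∈ DFinsupp.support w, ((w γ' : ↥(piShift 𝒜 ι d γ')) : ι → R) k = 0 := by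
        rw [← Finset.sum_apply (a := k), h0]
        rfl
      exact grHomTo_indep 𝒜 (d k) (DFinsupp.support w)
        (fun γ' => ((w γ' : ↥(piShift 𝒜 ι d γ')) : ι → R) k) id
        (Function.Injective.injOn fun a b h => h)
        (fun γ' _ => (w γ').2 k (Set.mem_univ k)) hcoord γ hγ
    · rw [DFinsupp.notMem_support_iff.mp hγ]; rfl
  · intro v
    have hmem : ∀ (k : ι) (μ : Γ),
        Pi.single k (DirectSum.decompose 𝒜 (v k) μ : R) ∈ piShift 𝒜 ι d (μ + d k) := by
      intro k μ k' _
      by_cases hk : k' = k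
      · subst hk
        rw [Pi.single_eq_same]
        exact grHomTo_of_mem 𝒜 rfl (DirectSum.decompose 𝒜 (v k') μ).2
      · rw [Pi.single_eq_of_ne hk]
        exact (grHomTo 𝒜 (d k') (μ + d k)).zero_mem
    refine ⟨∑ k : ι, ∑ μ ∈ DFinsupp.support (DirectSum.decompose 𝒜 (v k)),
      DirectSum.of (fun γ => ↥(piShift 𝒜 ι d γ)) (μ + d k)
        ⟨Pi.single k (DirectSum.decompose 𝒜 (v k) μ : R), hmem k μ⟩, ?_⟩
    rw [map_sum]
    have h1 : ∀ k : ι, DirectSum.coeAddMonoidHom (piShift 𝒜 ι d)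
        (∑ μ ∈ DFinsupp.support (DirectSum.decompose 𝒜 (v k)),
          DirectSum.of (fun γ => ↥(piShift 𝒜 ι d γ)) (μ + d k)
            ⟨Pi.single k (DirectSum.decompose 𝒜 (v k) μ : R), hmem k μ⟩)
        = Pi.single k (v k) := by
      intro k
      rw [map_sum]
      rw [Finset.sum_congr rfl fun μ _ => DirectSum.coeAddMonoidHom_of _ _ _]
      have h2 : ∀ μ ∈ DFinsupp.support (DirectSum.decompose 𝒜 (v k)),
          (⟨Pi.single k (DirectSum.decompose 𝒜 (v k) μ : R), hmem k μ⟩ :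
            ↥(piShift 𝒜 ι d (μ + d k))).val
          = Pi.single k (DirectSum.decompose 𝒜 (v k) μ : R) := fun μ _ => rfl
      have h3 : (∑ μ ∈ DFinsupp.support (DirectSum.decompose 𝒜 (v k)),
          Pi.single (M := fun _ : ι => R) k ((DirectSum.decompose 𝒜 (v k) μ : R)))
          = Pi.single k (v k) := by
        funext k'
        rw [Finset.sum_apply]
        by_cases hk : k' = k
        · subst hk
          simp only [Pi.single_eq_same]
          exact DirectSum.sum_support_decompose 𝒜 (v k')
        · simp only [Pi.single_eq_of_ne hk, Finset.sum_const_zero]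
      rw [Finset.sum_congr rfl h2, h3]
    rw [Finset.sum_congr rfl fun k _ => h1 k]
    exact Finset.univ_sum_single v

lemma smulClosed_piShift (hmul : MulClosed 𝒜) : SMulClosed 𝒜 (piShift 𝒜 ι d) := by
  intro i j a v ha hv k _
  have : (a • v) k = a * v k := rfl
  rw [this]
  rcases grHomTo_cases 𝒜 (hv k (Set.mem_univ k)) with h | ⟨μ, hμ, hmem⟩
  · rw [h, mul_zero]; exact (grHomTo 𝒜 (d k) (i + j)).zero_mem
  · refine grHomTo_of_mem 𝒜 (μ := i + μ) ?_ (hmul ha hmem)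
    rw [add_assoc, hμ]

end PiShift

end Aux

end Chunk8

section Chunk9

namespace Aux

open DirectSum
open scoped Classical

variable {Γ : Type} [DecidableEq Γ] [AddCancelMonoid Γ] {R : Type} [CommRing R]
variable (𝒜 : Γ → AddSubgroup R) [DirectSum.Decomposition 𝒜]

/-- A finitely generated graded ideal which is gr-projective is projective. -/
lemma projective_of_fg_graded (hmul : MulClosed 𝒜) (I : Submodule R R)
    (hI : ∀ x ∈ I, ∀ γ, (DirectSum.decompose 𝒜 x γ : R) ∈ I) (hFG : I.FG)
    (hgrproj : IsGrProjective 𝒜 (subGrading 𝒜 I)) : Module.Projective R ↥I := by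
  obtain ⟨ι, hfin, d, xg, hxh, hxI, hspan⟩ := exists_homog_generators 𝒜 I hI hFG
  letI := hfin
  letI : DecidableEq ι := Classical.decEq ι
  letI : DirectSum.Decomposition (piShift 𝒜 ι d) :=
    (isInternal_piShift 𝒜 ι d).chooseDecomposition
  letI : DirectSum.Decomposition (subGrading 𝒜 I) := subDecomp 𝒜 I hI
  have hsum : ∀ v : ι → R, ∑ k, v k * xg k ∈ I :=
    fun v => sum_mem fun k _ => I.smul_mem (v k) (hxI k)
  set g : (ι → R) →ₗ[R] ↥I :=
    { toFun := fun v => ⟨∑ k, v k * xg k, hsum v⟩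
      map_add' := by
        intro v v'
        apply Subtype.ext
        push_cast
        rw [← Finset.sum_add_distrib]
        exact Finset.sum_congr rfl fun k _ => add_mul _ _ _
      map_smul' := by
        intro a v
        apply Subtype.ext
        push_cast
        simp only [RingHom.id_apply, Pi.smul_apply, smul_eq_mul, Finset.mul_sum]
        exact Finset.sum_congr rfl fun k _ => mul_assoc _ _ _ } with hg
  have ghom : IsHomogeneousHom (piShift 𝒜 ι d) (subGrading 𝒜 I) g := by
    intro γ v hv
    show (g v : R) ∈ 𝒜 γ
    have : (g v : R) = ∑ k, v k * xg k := rfl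
    rw [this]
    exact sum_mem fun k _ => grHomTo_mul_mem 𝒜 hmul (hv k (Set.mem_univ k)) (hxh k)
  have gsurj : Function.Surjective g := by
    intro y
    have hy : (y : R) ∈ Submodule.span R (Set.range xg) := by rw [hspan]; exact y.2
    obtain ⟨c, hc⟩ := (Submodule.mem_span_range_iff_exists_fun R).mp hy
    refine ⟨c, Subtype.ext ?_⟩
    have : (g c : R) = ∑ k, c k * xg k := rfl
    rw [this]
    simpa [smul_eq_mul] using hc
  obtain ⟨h, hhom, hgh⟩ := hgrproj (ι → R) ↥I (piShift 𝒜 ι d) (subGrading 𝒜 I)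
    (smulClosed_piShift 𝒜 ι d hmul)
    (smulClosed_subGrading 𝒜 I 𝒜 (smulClosed_self 𝒜 hmul))
    g ghom gsurj LinearMap.id (fun i x hx => hx)
  exact Module.Projective.of_split h g hgh

/-- Any graded ideal over a graded semihereditary ring is flat. -/
lemma flat_forward (hmul : MulClosed 𝒜)
    (hproj : ∀ I' : Submodule R R, (∀ x ∈ I', ∀ γ, (DirectSum.decompose 𝒜 x γ : R) ∈ I') →
      I'.FG → Module.Projective R ↥I')
    (I : Submodule R R)
    (hI : ∀ x ∈ I, ∀ γ, (DirectSum.decompose 𝒜 x γ : R) ∈ I) : Module.Flat R ↥I := by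
  refine flat_of_forall_fintype (fun {ι} _ {f} {x} hrel => ?_)
  set T : Finset Γ := Finset.univ.biUnion
    (fun i : ι => DFinsupp.support (DirectSum.decompose 𝒜 ((x i : R)))) with hT
  set xc : ι × {ν : Γ // ν ∈ T} → R :=
    fun p => (DirectSum.decompose 𝒜 ((x p.1 : R)) p.2.val : R) with hxc
  set I₀ : Submodule R R := Submodule.span R (Set.range xc) with hI₀
  have hgr : ∀ r ∈ I₀, ∀ γ, (DirectSum.decompose 𝒜 r γ : R) ∈ I₀ := by
    refine isGraded_span 𝒜 hmul _ ?_
    rintro s ⟨p, rfl⟩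
    exact ⟨p.2.val, (DirectSum.decompose 𝒜 ((x p.1 : R)) p.2.val).2⟩
  have hle : I₀ ≤ I := by
    rw [hI₀, Submodule.span_le]
    rintro s ⟨p, rfl⟩
    exact hI _ (x p.1).2 _
  have hFG : I₀.FG := Submodule.fg_span (Set.finite_range xc)
  haveI : Module.Projective R ↥I₀ := hproj I₀ hgr hFG
  haveI : Module.Flat R ↥I₀ := inferInstance
  have hx₀ : ∀ i, (x i : R) ∈ I₀ := by
    intro i
    have hsupp : DFinsupp.support (DirectSum.decompose 𝒜 ((x i : R))) ⊆ T :=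
      Finset.subset_biUnion_of_mem
        (fun i : ι => DFinsupp.support (DirectSum.decompose 𝒜 ((x i : R))))
        (Finset.mem_univ i)
    have h1 : (x i : R) = ∑ ν ∈ T, (DirectSum.decompose 𝒜 ((x i : R)) ν : R) :=
      (sum_decompose_of_supset 𝒜 hsupp).symm
    rw [h1]
    exact sum_mem fun ν hν => Submodule.subset_span ⟨(i, ⟨ν, hν⟩), rfl⟩
  set x' : ι → ↥I₀ := fun i => ⟨(x i : R), hx₀ i⟩ with hx'
  have hrel' : ∑ i, f i • x' i = 0 := by
    apply Subtype.ext
    push_cast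
    have h2 := congrArg (Submodule.subtype I) hrel
    rw [map_sum, map_zero] at h2
    simpa using h2
  obtain ⟨κ, a, y, h1, h2⟩ := Module.Flat.isTrivialRelation_of_sum_smul_eq_zero hrel'
  refine ⟨κ, a, fun j => ⟨(y j : R), hle (y j).2⟩, ?_, h2⟩
  intro i
  apply Subtype.ext
  have h3 := congrArg (Submodule.subtype I₀) (h1 i)
  rw [map_sum] at h3
  push_cast
  push_cast at h3
  convert h3 using 2 <;> rfl

end Aux

end Chunk9

section Stmt18

variable {Γ : Type} [DecidableEq Γ] [AddCancelMonoid Γ] {R : Type} [CommRing R]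

/-- `R` is graded left semihereditary iff `R` is graded left coherent and
every homogeneous left ideal is gr-flat. -/
theorem graded_semihereditary_iff_coherent_flat (𝒜 : Γ → AddSubgroup R)
    [DirectSum.Decomposition 𝒜] (hmul : MulClosed 𝒜) :
    GrLeftSemihereditary 𝒜 ↔
      (GrLeftCoherent 𝒜 ∧
        ∀ I : Submodule R R, IsGradedSubmodule 𝒜 I → IsGrFlat 𝒜 (subGrading 𝒜 I)) := by
  classical
  constructor
  · intro hSH
    have hproj : ∀ I : Submodule R R, IsGradedSubmodule 𝒜 I → I.FG → Module.Projective R ↥I :=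
      fun I hI hFG => Aux.projective_of_fg_graded 𝒜 hmul I hI hFG (hSH I hI hFG)
    constructor
    · intro I hI hFG
      haveI : Module.Projective R ↥I := hproj I hI hFG
      haveI : Module.Finite R ↥I := Module.Finite.iff_fg.mpr hFG
      exact Module.finitePresentation_of_projective R ↥I
    · intro I hI
      haveI : Module.Flat R ↥I := Aux.flat_forward 𝒜 hmul hproj I hI
      intro M N _ _ _ _ ℳ 𝒩 _ _ hM hN f hfhom hfinj
      exact Module.Flat.rTensor_preserves_injective_linearMap f hfinj
  · rintro ⟨hcoh, hgrfl⟩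
    intro I hI hFG
    haveI : Module.FinitePresentation R ↥I := hcoh I hI hFG
    have hflatW : ∀ W : Submodule R R,
        (∀ x ∈ W, ∀ γ, (DirectSum.decompose 𝒜 x γ : R) ∈ W) →
        Function.Injective (LinearMap.rTensor ↥I W.subtype) := by
      intro W hW
      letI : DirectSum.Decomposition (subGrading 𝒜 W) := Aux.subDecomp 𝒜 W hW
      exact hgrfl I hI ↥W R (subGrading 𝒜 W) 𝒜
        (Aux.smulClosed_subGrading 𝒜 W 𝒜 (Aux.smulClosed_self 𝒜 hmul))
        (Aux.smulClosed_self 𝒜 hmul)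
        W.subtype (fun i x hx => hx) (Submodule.injective_subtype W)
    haveI : Module.Flat R ↥I := Aux.flat_of_graded_rTensor_inj 𝒜 hmul I hI hflatW
    have hp : Module.Projective R ↥I := by
      rw [← Module.freeLocus_eq_univ_iff]
      exact Module.freeLocus_eq_univ
    letI : DirectSum.Decomposition (subGrading 𝒜 I) := Aux.subDecomp 𝒜 I hI
    exact Aux.isGrProjective_of_projective 𝒜 (subGrading 𝒜 I)
      (Aux.smulClosed_subGrading 𝒜 I 𝒜 (Aux.smulClosed_self 𝒜 hmul)) hp


end Stmt18

end GradedPaper
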